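/- arXiv:2103.04488 — 5 statements merged into one kernel-verified Lean document; each statement's English description precedes it below -/
import Mathlib

section
/- For every positive integer n it holds that √(2πn) (n/e)^n e^{1/(12n+1)} < n! < √(2πn) (n/e)^n e^{1/(12n)}. -/
open Real

open Stirling Filter Topology

lemma upper_step (m : ℕ) :
    Real.log (stirlingSeq (m+1)) - Real.log (stirlingSeq (m+2)) <
      1/(12*((m:ℝ)+1)) - 1/(12*((m:ℝ)+2)) := by
  have hx0 : (0:ℝ) ≤ (m:ℝ) := Nat.cast_nonneg m
  set t : ℝ := (1 / (2 * ((m:ℝ) + 1) + 1)) ^ 2 with ht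
  have ht0 : 0 < t := by positivity
  have ht1 : t < 1 := by
    rw [ht, div_pow, one_pow, div_lt_one (by positivity)]
    nlinarith
  set f : ℕ → ℝ := fun k => (1 : ℝ) / (2 * ((k:ℝ) + 1) + 1) * t ^ (k+1) with hf
  set g : ℕ → ℝ := fun k => (1/3 : ℝ) * t ^ (k+1) with hg
  have hgeo : HasSum g (1/(12*((m:ℝ)+1)) - 1/(12*((m:ℝ)+2))) := by
    have h := (hasSum_geometric_of_lt_one ht0.le ht1).mul_left (1/3 * t)
    have heq : (1/3 * t) * (1 - t)⁻¹ = 1/(12*((m:ℝ)+1)) - 1/(12*((m:ℝ)+2)) := by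
      have h3 : (1:ℝ) - t = (4*((m:ℝ)+1)*((m:ℝ)+2))/((2*((m:ℝ)+1)+1)^2) := by
        rw [ht]; field_simp; ring
      rw [h3, ht]; field_simp; ring
    rw [heq] at h
    convert h using 2 with k
    show (1:ℝ)/3 * t ^ (k+1) = 1/3 * t * t ^ k
    rw [pow_succ]; ring
    rfl
  have hsum : HasSum f (Real.log (stirlingSeq (m+1)) - Real.log (stirlingSeq (m+2))) := by
    have h := log_stirlingSeq_diff_hasSum m
    push_cast at h
    convert h using 2 with k
  have hle : ∀ k : ℕ, f k ≤ g k := by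
    intro k
    have h5 : (1:ℝ) / (2 * ((k:ℝ)+1) + 1) ≤ 1/3 := by
      rw [div_le_div_iff₀ (by positivity) (by norm_num)]
      linarith [Nat.cast_nonneg (α := ℝ) k]
    exact mul_le_mul_of_nonneg_right h5 (by positivity)
  have hi : f 1 < g 1 := by
    rw [hf, hg]
    have htp : (0:ℝ) < t ^ 2 := by positivity
    norm_num
    nlinarith
  exact hasSum_lt hle hi hsum hgeo

lemma lower_step (m : ℕ) :
    1/(12*((m:ℝ)+1)+1) - 1/(12*((m:ℝ)+2)+1) <
      Real.log (stirlingSeq (m+1)) - Real.log (stirlingSeq (m+2)) := by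
  have hx0 : (0:ℝ) ≤ (m:ℝ) := Nat.cast_nonneg m
  set t : ℝ := (1 / (2 * ((m:ℝ) + 1) + 1)) ^ 2 with ht
  have ht0 : 0 < t := by positivity
  have ht1 : t < 1 := by
    rw [ht, div_pow, one_pow, div_lt_one (by positivity)]
    nlinarith
  set f : ℕ → ℝ := fun k => (1 : ℝ) / (2 * ((k:ℝ) + 1) + 1) * t ^ (k+1) with hf
  set g : ℕ → ℝ := fun k => (t/3) ^ (k+1) with hg
  have hsum : HasSum f (Real.log (stirlingSeq (m+1)) - Real.log (stirlingSeq (m+2))) := by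
    have h := log_stirlingSeq_diff_hasSum m
    push_cast at h
    convert h using 2 with k
  have hG : HasSum g (t / (3 - t)) := by
    have hr0 : (0:ℝ) ≤ t/3 := by positivity
    have hr1 : t/3 < 1 := by linarith
    have h := (hasSum_geometric_of_lt_one hr0 hr1).mul_left (t/3)
    have heq : (t/3) * (1 - t/3)⁻¹ = t / (3 - t) := by
      rw [show (1:ℝ) - t/3 = (3-t)/3 by ring, inv_div, div_mul_div_comm, mul_comm t 3,
        mul_div_mul_left _ _ (three_ne_zero)]
    rw [heq] at h
    convert h using 2 with k
    show (t/3) ^ (k+1) = t/3 * (t/3) ^ k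
    rw [pow_succ]; ring
    rfl
  have hle : ∀ k : ℕ, g k ≤ f k := by
    intro k
    show (t/3) ^ (k+1) ≤ (1 : ℝ) / (2 * ((k:ℝ) + 1) + 1) * t ^ (k+1)
    rw [div_pow, one_div, ← div_eq_inv_mul, div_le_div_iff₀ (by positivity) (by positivity)]
    have hb : (1:ℝ) + (k+1) * 2 ≤ (3:ℝ) ^ (k+1) := by
      have := one_add_mul_le_pow (a := (2:ℝ)) (by norm_num) (k+1)
      push_cast at this ⊢
      convert this using 2 <;> norm_num
      rfl
    have htp : (0:ℝ) ≤ t ^ (k+1) := by positivity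
    push_cast at hb ⊢
    nlinarith
  have hmain := hasSum_le hle hG hsum
  refine lt_of_lt_of_le ?_ hmain
  have h4 : t / (3 - t) = 1/(12*(m:ℝ)^2+36*(m:ℝ)+26) := by
    rw [ht, div_eq_div_iff (by nlinarith) (by positivity)]
    field_simp
    ring
  rw [h4, div_sub_div _ _ (by positivity) (by positivity),
    div_lt_div_iff₀ (by positivity) (by positivity)]
  nlinarith


lemma tendsto_aux (c : ℝ) :
    Tendsto (fun m : ℕ => 1/(12*((m:ℝ)+1)+c)) atTop (𝓝 0) := by
  have h : Tendsto (fun m : ℕ => 12*((m:ℝ)+1)+c) atTop atTop := by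
    apply tendsto_atTop_add_const_right
    apply Tendsto.const_mul_atTop (by norm_num : (0:ℝ) < 12)
    exact tendsto_atTop_add_const_right _ _ tendsto_natCast_atTop_atTop
  simpa [one_div, Pi.inv_def] using h.inv_tendsto_atTop

lemma d_tendsto : Tendsto (fun m : ℕ => Real.log (stirlingSeq (m+1))) atTop (𝓝 (Real.log (√π))) := by
  have hπ : (0:ℝ) < √π := Real.sqrt_pos.mpr pi_pos
  exact ((Real.continuousAt_log hπ.ne').tendsto.comp
    (tendsto_stirlingSeq_sqrt_pi.comp (tendsto_add_atTop_nat 1)))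

lemma upper_bound_log (m : ℕ) :
    Real.log (stirlingSeq (m+1)) < Real.log (√π) + 1/(12*((m:ℝ)+1)) := by
  set u : ℕ → ℝ := fun m => Real.log (stirlingSeq (m+1)) - 1/(12*((m:ℝ)+1)) with hu
  have hstep : ∀ m : ℕ, u m < u (m+1) := by
    intro k
    have h := upper_step k
    simp only [hu]
    have e : k + 1 + 1 = k + 2 := rfl
    rw [e]
    push_cast
    ring_nf at h ⊢
    linarith
  have hmono : Monotone u := (strictMono_nat_of_lt_succ hstep).monotone
  have htend : Tendsto u atTop (𝓝 (Real.log (√π))) := by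
    have h0 := d_tendsto.sub (tendsto_aux 0)
    rw [sub_zero] at h0
    exact h0.congr fun m => by simp [hu, one_div]
  have h1 : u (m+1) ≤ Real.log (√π) := hmono.ge_of_tendsto htend (m+1)
  have h2 := hstep m
  simp only [hu] at h1 h2 ⊢
  linarith

lemma lower_bound_log (m : ℕ) :
    Real.log (√π) + 1/(12*((m:ℝ)+1)+1) < Real.log (stirlingSeq (m+1)) := by
  set v : ℕ → ℝ := fun m => Real.log (stirlingSeq (m+1)) - 1/(12*((m:ℝ)+1)+1) with hv
  have hstep : ∀ m : ℕ, v (m+1) < v m := by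
    intro k
    have h := lower_step k
    simp only [hv]
    have e : k + 1 + 1 = k + 2 := rfl
    rw [e]
    push_cast
    ring_nf at h ⊢
    linarith
  have hanti : Antitone v := (strictAnti_nat_of_succ_lt hstep).antitone
  have htend : Tendsto v atTop (𝓝 (Real.log (√π))) := by
    have h0 := d_tendsto.sub (tendsto_aux 1)
    rw [sub_zero] at h0
    exact h0.congr fun m => by simp [hv, one_div]
  have h1 : Real.log (√π) ≤ v (m+1) := hanti.le_of_tendsto htend (m+1)
  have h2 := hstep m
  simp only [hv] at h1 h2 ⊢
  linarith

theorem stirling_bounds (n : ℕ) (hn : 1 ≤ n) :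
    Real.sqrt (2 * π * n) * ((n : ℝ) / Real.exp 1) ^ n * Real.exp (1 / (12 * n + 1))
      < (Nat.factorial n : ℝ) ∧
    (Nat.factorial n : ℝ)
      < Real.sqrt (2 * π * n) * ((n : ℝ) / Real.exp 1) ^ n * Real.exp (1 / (12 * n)) := by
  obtain ⟨m, rfl⟩ : ∃ m, n = m + 1 := ⟨n - 1, by omega⟩
  have hπ : (0:ℝ) < √π := Real.sqrt_pos.mpr pi_pos
  have hs : 0 < stirlingSeq (m+1) := stirlingSeq'_pos m
  set B : ℝ := √(2*((m:ℝ)+1)) * (((m:ℝ)+1)/Real.exp 1)^(m+1) with hBdef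
  have hB : 0 < B := by positivity
  have hsB : stirlingSeq (m+1) = (Nat.factorial (m+1) : ℝ) / B := by
    rw [hBdef, stirlingSeq]
    push_cast
    ring_nf
  have hsqrt : √(2 * π * ((m:ℝ)+1)) = √π * √(2*((m:ℝ)+1)) := by
    rw [show (2 * π * ((m:ℝ)+1)) = π * (2*((m:ℝ)+1)) by ring, Real.sqrt_mul pi_pos.le]
  have e1 : √π * Real.exp (1/(12*((m:ℝ)+1)+1)) < stirlingSeq (m+1) := by
    have h := Real.exp_lt_exp.mpr (lower_bound_log m)
    rwa [Real.exp_add, Real.exp_log hπ, Real.exp_log hs] at h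
  have e2 : stirlingSeq (m+1) < √π * Real.exp (1/(12*((m:ℝ)+1))) := by
    have h := Real.exp_lt_exp.mpr (upper_bound_log m)
    rwa [Real.exp_add, Real.exp_log hπ, Real.exp_log hs] at h
  rw [hsB] at e1 e2
  constructor
  · have h := (lt_div_iff₀ hB).mp e1
    push_cast
    calc √(2 * π * ((m:ℝ)+1)) * (((m:ℝ)+1) / Real.exp 1) ^ (m+1) *
          Real.exp (1 / (12 * ((m:ℝ)+1) + 1))
        = √π * Real.exp (1/(12*((m:ℝ)+1)+1)) * B := by rw [hsqrt, hBdef]; ring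
      _ < (Nat.factorial (m+1) : ℝ) := h
  · have h := (div_lt_iff₀ hB).mp e2
    push_cast
    calc (Nat.factorial (m+1) : ℝ)
        < √π * Real.exp (1/(12*((m:ℝ)+1))) * B := h
      _ = √(2 * π * ((m:ℝ)+1)) * (((m:ℝ)+1) / Real.exp 1) ^ (m+1) *
          Real.exp (1 / (12 * ((m:ℝ)+1))) := by rw [hsqrt, hBdef]; ring
end

section
/- For every positive integer d and all σ, s in (0, ∞) it holds that ∫_{{x ∈ ℝ^d : ‖x‖₂ ≤ s}} e^{-σ ‖x‖₂²} dx ≥ (π/σ)^{d/2} (1 - e^{-σ s²/d})^d. -/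
open Real MeasureTheory

lemma gaussian_oneD (σ t : ℝ) (hσ : 0 < σ) (ht : 0 < t) :
    √(π/σ) * (1 - Real.exp (-σ * t ^ 2)) ≤ ∫ x in Set.Icc (-t) t, Real.exp (-σ * x ^ 2) := by
  have hInt : Integrable (fun x : ℝ => Real.exp (-σ * x ^ 2)) := integrable_exp_neg_mul_sq hσ
  have hsplit : (∫ x in Set.Icc (-t) t, Real.exp (-σ * x ^ 2))
      + ∫ x in (Set.Icc (-t) t)ᶜ, Real.exp (-σ * x ^ 2) = √(π/σ) := by
    rw [integral_add_compl measurableSet_Icc hInt, integral_gaussian]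
  have hIccC : (Set.Icc (-t) t)ᶜ = Set.Iio (-t) ∪ Set.Ioi t := by
    ext x
    simp only [Set.mem_compl_iff, Set.mem_Icc, not_and_or, not_le, Set.mem_union, Set.mem_Iio,
      Set.mem_Ioi]
  have hcompl : (∫ x in (Set.Icc (-t) t)ᶜ, Real.exp (-σ * x ^ 2))
      = (∫ x in Set.Iio (-t), Real.exp (-σ * x ^ 2)) + ∫ x in Set.Ioi t, Real.exp (-σ * x ^ 2) := by
    rw [hIccC, setIntegral_union ?_ measurableSet_Ioi hInt.integrableOn hInt.integrableOn]
    exact (Set.Iio_disjoint_Ici (by linarith : -t ≤ t)).mono_right Set.Ioi_subset_Ici_self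
  have hsym : (∫ x in Set.Iio (-t), Real.exp (-σ * x ^ 2))
      = ∫ x in Set.Ioi t, Real.exp (-σ * x ^ 2) := by
    have h := (Measure.measurePreserving_neg (volume : Measure ℝ)).setIntegral_preimage_emb
      (MeasurableEquiv.neg ℝ).measurableEmbedding
      (fun x => Real.exp (-σ * x ^ 2)) (Set.Iio (-t))
    simp only [neg_sq] at h
    rw [← h]
    congr 1
    ext x
    simp [MeasurableEquiv.neg]
  have htail : ∫ x in Set.Ioi t, Real.exp (-σ * x ^ 2) ≤ Real.exp (-σ * t ^ 2) * (√(π/σ)/2) := by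
    have htrans : ∫ x in Set.Ioi t, Real.exp (-σ * (x - t) ^ 2)
        = ∫ x in Set.Ioi (0:ℝ), Real.exp (-σ * x ^ 2) := by
      have := (measurePreserving_add_right (volume : Measure ℝ) t).setIntegral_preimage_emb
        (MeasurableEquiv.addRight t).measurableEmbedding
        (fun x => Real.exp (-σ * (x - t)^2)) (Set.Ioi t)
      simpa using this.symm
    calc ∫ x in Set.Ioi t, Real.exp (-σ * x ^ 2)
        ≤ ∫ x in Set.Ioi t, Real.exp (-σ * t^2) * Real.exp (-σ * (x - t) ^ 2) := by
          apply setIntegral_mono_on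
          · exact hInt.integrableOn
          · exact ((hInt.comp_sub_right t).const_mul _).integrableOn
          · exact measurableSet_Ioi
          · intro x hx
            rw [← Real.exp_add]
            apply Real.exp_le_exp.2
            nlinarith [mul_nonneg (mul_nonneg hσ.le ht.le)
              (sub_nonneg.2 (le_of_lt (Set.mem_Ioi.1 hx)))]
      _ = Real.exp (-σ * t ^ 2) * (√(π/σ)/2) := by
          rw [integral_const_mul, htrans, integral_gaussian_Ioi]
  nlinarith [hsplit, hcompl, hsym, htail]

theorem gaussian_ball_lower (d : ℕ) (hd : 1 ≤ d) (σ s : ℝ) (hσ : 0 < σ) (hs : 0 < s) :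
    (∫ x in {y : EuclideanSpace ℝ (Fin d) | ‖y‖ ≤ s}, Real.exp (-σ * ‖x‖ ^ 2))
      ≥ (π / σ) ^ ((d : ℝ) / 2) * (1 - Real.exp (-σ * s ^ 2 / d)) ^ d := by
  have hd0 : (0:ℝ) < d := by exact_mod_cast Nat.lt_of_lt_of_le Nat.zero_lt_one hd
  set t : ℝ := s / Real.sqrt d with ht_def
  have hsd : (0:ℝ) < Real.sqrt d := Real.sqrt_pos.2 hd0
  have ht : 0 < t := div_pos hs hsd
  have ht2 : t ^ 2 = s ^ 2 / d := by
    rw [ht_def, div_pow, Real.sq_sqrt hd0.le]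
  -- the equivalence with the pi space
  set e := (MeasurableEquiv.toLp 2 (Fin d → ℝ)).symm with he
  set S : Set (Fin d → ℝ) := Set.univ.pi fun _ => Set.Icc (-t) t with hS
  set cube : Set (EuclideanSpace ℝ (Fin d)) := e ⁻¹' S with hcube
  have hnorm_sq : ∀ x : EuclideanSpace ℝ (Fin d), ‖x‖ ^ 2 = ∑ i, (x i) ^ 2 := by
    intro x
    rw [EuclideanSpace.norm_eq, Real.sq_sqrt (by positivity)]
    simp [Real.norm_eq_abs, sq_abs]
  have hexp_prod : ∀ x : EuclideanSpace ℝ (Fin d),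
      Real.exp (-σ * ‖x‖ ^ 2) = ∏ i, Real.exp (-σ * (x i) ^ 2) := by
    intro x
    rw [hnorm_sq, Finset.mul_sum, ← Real.exp_sum]
  -- cube integral equals the power of one-dimensional integrals
  have hcube_int : (∫ x in cube, Real.exp (-σ * ‖x‖ ^ 2))
      = (∫ u in Set.Icc (-t) t, Real.exp (-σ * u ^ 2)) ^ d := by
    have hgoal1 : (∫ x in cube, Real.exp (-σ * ‖x‖ ^ 2))
        = ∫ y in S, ∏ i, Real.exp (-σ * (y i) ^ 2) := by
      rw [← (EuclideanSpace.volume_preserving_symm_measurableEquiv_toLp (Fin d)).setIntegral_preimage_emb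
        (MeasurableEquiv.toLp 2 (Fin d → ℝ)).symm.measurableEmbedding
        (fun y => ∏ i, Real.exp (-σ * (y i) ^ 2)) S]
      refine setIntegral_congr_fun
        ((MeasurableSet.univ_pi fun _ => measurableSet_Icc).preimage e.measurable) ?_
      intro x _
      simpa using hexp_prod x
    rw [hgoal1]
    have hindS : MeasurableSet S := MeasurableSet.univ_pi fun _ => measurableSet_Icc
    rw [← integral_indicator hindS]
    have hind_eq : S.indicator (fun y => ∏ i, Real.exp (-σ * (y i) ^ 2))
        = fun y => ∏ i, (Set.Icc (-t) t).indicator (fun u => Real.exp (-σ * u ^ 2)) (y i) := by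
      funext y
      by_cases hy : y ∈ S
      · rw [Set.indicator_of_mem hy]
        exact Finset.prod_congr rfl fun i _ =>
          (Set.indicator_of_mem (show y i ∈ Set.Icc (-t) t from hy i (Set.mem_univ i)) (fun u => Real.exp (-σ * u ^ 2))).symm
      · rw [Set.indicator_of_notMem hy]
        simp only [hS, Set.mem_univ_pi, not_forall] at hy
        obtain ⟨i, hi⟩ := hy
        exact (Finset.prod_eq_zero (Finset.mem_univ i)
          (Set.indicator_of_notMem hi _)).symm
    rw [hind_eq, integral_fintype_prod_volume_eq_pow (ι := Fin d)
      ((Set.Icc (-t) t).indicator (fun u => Real.exp (-σ * u ^ 2))),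
      integral_indicator measurableSet_Icc]
    simp
  -- cube is contained in the ball
  have hsub : cube ⊆ {y : EuclideanSpace ℝ (Fin d) | ‖y‖ ≤ s} := by
    intro x hx
    simp only [Set.mem_setOf_eq]
    have hb : ∀ i, (x i) ^ 2 ≤ t ^ 2 := by
      intro i
      have h12 := hx i (Set.mem_univ i)
      have hxi : e x i = x i := rfl
      rw [hxi] at h12
      rcases h12 with ⟨h1, h2⟩
      nlinarith
    have : ‖x‖ ^ 2 ≤ s ^ 2 := by
      rw [hnorm_sq]
      calc ∑ i, (x i) ^ 2 ≤ ∑ _i : Fin d, t ^ 2 := Finset.sum_le_sum fun i _ => hb i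
        _ = d * t ^ 2 := by simp [Finset.sum_const, nsmul_eq_mul]
        _ = s ^ 2 := by rw [ht2]; field_simp
    nlinarith [norm_nonneg x, hs.le]
  -- integrability on the ball
  have hball_eq : {y : EuclideanSpace ℝ (Fin d) | ‖y‖ ≤ s} = Metric.closedBall 0 s := by
    ext y; simp [Metric.mem_closedBall, dist_zero_right]
  have hball_int : IntegrableOn (fun x : EuclideanSpace ℝ (Fin d) => Real.exp (-σ * ‖x‖ ^ 2))
      {y : EuclideanSpace ℝ (Fin d) | ‖y‖ ≤ s} := by
    rw [hball_eq]
    exact ContinuousOn.integrableOn_compact (isCompact_closedBall 0 s)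
      (Real.continuous_exp.comp (continuous_const.mul (continuous_norm.pow 2))).continuousOn
  -- monotonicity
  have hmono : (∫ x in cube, Real.exp (-σ * ‖x‖ ^ 2))
      ≤ ∫ x in {y : EuclideanSpace ℝ (Fin d) | ‖y‖ ≤ s}, Real.exp (-σ * ‖x‖ ^ 2) := by
    apply setIntegral_mono_set hball_int
    · exact Filter.Eventually.of_forall fun x => (Real.exp_pos _).le
    · exact HasSubset.Subset.eventuallyLE hsub
  -- rewrite RHS
  have hRHS : (π / σ) ^ ((d : ℝ) / 2) * (1 - Real.exp (-σ * s ^ 2 / d)) ^ d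
      = (√(π/σ) * (1 - Real.exp (-σ * t ^ 2))) ^ d := by
    have h1 : (π / σ) ^ ((d : ℝ) / 2) = (√(π/σ)) ^ d := by
      rw [Real.sqrt_eq_rpow, ← Real.rpow_natCast ((π/σ) ^ ((1:ℝ)/2)) d,
        ← Real.rpow_mul (by positivity)]
      ring_nf
    have h2 : -σ * s ^ 2 / d = -σ * t ^ 2 := by
      rw [ht2]; field_simp
    rw [h1, h2, mul_pow]
  rw [ge_iff_le, hRHS]
  calc (√(π/σ) * (1 - Real.exp (-σ * t ^ 2))) ^ d
      ≤ (∫ u in Set.Icc (-t) t, Real.exp (-σ * u ^ 2)) ^ d := by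
        apply pow_le_pow_left₀ ?_ (gaussian_oneD σ t hσ ht)
        have : Real.exp (-σ * t ^ 2) ≤ 1 := by
          rw [← Real.exp_zero]
          apply Real.exp_le_exp.2
          nlinarith
        have := Real.sqrt_nonneg (π/σ)
        nlinarith
    _ = ∫ x in cube, Real.exp (-σ * ‖x‖ ^ 2) := hcube_int.symm
    _ ≤ _ := hmono
end

section
/- For every positive integer d and all σ, s in (0, ∞) it holds that ∫_{{x ∈ ℝ^d : ‖x‖₂ ≥ s}} (σ/π)^{d/2} e^{-σ ‖x‖₂²} dx ≤ d e^{-σ s²/d}. -/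
open Real MeasureTheory Set

lemma gauss_total {σ : ℝ} (hσ : 0 < σ) :
    ∫ t : ℝ, Real.sqrt (σ / π) * Real.exp (-σ * t ^ 2) = 1 := by
  rw [integral_const_mul, integral_gaussian, ← Real.sqrt_mul (by positivity)]
  rw [show σ / π * (π / σ) = 1 by field_simp, Real.sqrt_one]

lemma gauss_half {σ : ℝ} (hσ : 0 < σ) :
    ∫ t in Ici (0:ℝ), Real.sqrt (σ / π) * Real.exp (-σ * t ^ 2) = 1 / 2 := by
  rw [integral_Ici_eq_integral_Ioi, integral_const_mul, integral_gaussian_Ioi,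
    ← mul_div_assoc, ← Real.sqrt_mul (by positivity),
    show σ / π * (π / σ) = 1 by field_simp, Real.sqrt_one]

lemma gauss_integrable {σ : ℝ} (hσ : 0 < σ) :
    Integrable (fun t : ℝ => Real.sqrt (σ / π) * Real.exp (-σ * t ^ 2)) :=
  (integrable_exp_neg_mul_sq hσ).const_mul _

lemma gauss_tail {σ a : ℝ} (hσ : 0 < σ) (ha : 0 < a) :
    ∫ t in {t : ℝ | a ≤ |t|}, Real.sqrt (σ / π) * Real.exp (-σ * t ^ 2)
      ≤ Real.exp (-σ * a ^ 2) := by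
  set g : ℝ → ℝ := fun t => Real.sqrt (σ / π) * Real.exp (-σ * t ^ 2) with hg
  have hgint : Integrable g := gauss_integrable hσ
  have hIci : ∫ t in Ici a, g t ≤ Real.exp (-σ * a ^ 2) * (1 / 2) := by
    have h1 : ∫ t in Ici a, g t ≤ ∫ t in Ici a, Real.exp (-σ * a ^ 2) * g (t - a) := by
      refine setIntegral_mono_on hgint.integrableOn ?_ measurableSet_Ici ?_
      · exact ((hgint.comp_sub_right a).const_mul _).integrableOn
      · intro t ht
        simp only [mem_Ici] at ht
        have hexp : Real.exp (-σ * t ^ 2)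
            ≤ Real.exp (-σ * a ^ 2) * Real.exp (-σ * (t - a) ^ 2) := by
          rw [← Real.exp_add, Real.exp_le_exp]
          nlinarith [mul_nonneg hσ.le (mul_nonneg ha.le (sub_nonneg.2 ht))]
        calc g t ≤ Real.sqrt (σ / π) * (Real.exp (-σ * a ^ 2) * Real.exp (-σ * (t - a) ^ 2)) :=
              mul_le_mul_of_nonneg_left hexp (Real.sqrt_nonneg _)
          _ = Real.exp (-σ * a ^ 2) * g (t - a) := by simp only [hg]; ring
    have h2 : ∫ t in Ici a, g (t - a) = ∫ t in Ici (0:ℝ), g t := by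
      have hmp : MeasurePreserving (fun x : ℝ => x + a) volume volume :=
        measurePreserving_add_right volume a
      have hemb : MeasurableEmbedding (fun x : ℝ => x + a) :=
        (Homeomorph.addRight a).measurableEmbedding
      have := hmp.setIntegral_preimage_emb hemb (fun t => g (t - a)) (Ici a)
      rw [← this]
      have hpre : (fun x : ℝ => x + a) ⁻¹' Ici a = Ici 0 := by
        ext x; simp [le_add_iff_nonneg_left]
      rw [hpre]
      simp
    have h3 : ∫ t in Ici a, Real.exp (-σ * a ^ 2) * g (t - a)
        = Real.exp (-σ * a ^ 2) * (1 / 2) := by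
      rw [integral_const_mul (Real.exp (-σ * a ^ 2)) (fun t => g (t - a)), h2, gauss_half hσ]
    exact h1.trans (le_of_eq h3)
  have hIic : ∫ t in Iic (-a), g t = ∫ t in Ici a, g t := by
    rw [← integral_comp_neg_Ioi a g, ← integral_Ici_eq_integral_Ioi]
    refine setIntegral_congr_fun measurableSet_Ici fun t _ => ?_
    simp [hg, neg_sq]
  have hset : {t : ℝ | a ≤ |t|} = Iic (-a) ∪ Ici a := by
    ext t
    simp only [mem_setOf_eq, mem_union, mem_Iic, mem_Ici, le_abs, le_neg]
    tauto
  rw [hset, setIntegral_union (Iic_disjoint_Ici.2 (by simp; linarith)) measurableSet_Ici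
    hgint.integrableOn hgint.integrableOn, hIic]
  linarith

theorem gaussian_tail_ball_upper (d : ℕ) (hd : 1 ≤ d) (σ s : ℝ) (hσ : 0 < σ) (hs : 0 < s) :
    (∫ x in {y : EuclideanSpace ℝ (Fin d) | s ≤ ‖y‖},
        (σ / π) ^ ((d : ℝ) / 2) * Real.exp (-σ * ‖x‖ ^ 2))
      ≤ d * Real.exp (-σ * s ^ 2 / d) := by
  have hd0 : (0:ℝ) < d := by exact_mod_cast hd
  set a : ℝ := s / Real.sqrt d with ha_def
  have ha : 0 < a := div_pos hs (Real.sqrt_pos.2 hd0)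
  have ha2 : a ^ 2 = s ^ 2 / d := by
    rw [ha_def, div_pow, Real.sq_sqrt hd0.le]
  have hexp_eq : Real.exp (-σ * a ^ 2) = Real.exp (-σ * s ^ 2 / d) := by
    rw [ha2]; ring_nf
  set c : ℝ := Real.sqrt (σ / π) with hc_def
  set g : ℝ → ℝ := fun t => c * Real.exp (-σ * t ^ 2) with hg_def
  have hgnn : ∀ t, 0 ≤ g t := fun t => mul_nonneg (Real.sqrt_nonneg _) (Real.exp_pos _).le
  have hgint : Integrable g := gauss_integrable hσ
  -- the constant
  have hcd : (σ / π) ^ ((d : ℝ) / 2) = c ^ d := by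
    rw [hc_def, Real.sqrt_eq_rpow, ← Real.rpow_natCast ((σ / π) ^ ((1:ℝ)/2)) d,
      ← Real.rpow_mul (by positivity)]
    congr 1
    ring
  -- product form of the density
  have hprod : ∀ y : EuclideanSpace ℝ (Fin d),
      (σ / π) ^ ((d : ℝ) / 2) * Real.exp (-σ * ‖y‖ ^ 2) = ∏ j, g (y j) := by
    intro y
    have hnorm : ‖y‖ ^ 2 = ∑ j, (y j) ^ 2 := by
      rw [EuclideanSpace.norm_eq, Real.sq_sqrt (by positivity)]
      simp [Real.norm_eq_abs, sq_abs]
    rw [hnorm, Finset.mul_sum, Real.exp_sum, hcd, hg_def]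
    rw [Finset.prod_mul_distrib, Finset.prod_const, Finset.card_univ, Fintype.card_fin]
  -- transfer to the pi space
  set φ := (MeasurableEquiv.toLp 2 (Fin d → ℝ)).symm with hφ_def
  have hφ : MeasurePreserving φ.symm :=
    (EuclideanSpace.volume_preserving_symm_measurableEquiv_toLp (Fin d)).symm
  set S : Set (EuclideanSpace ℝ (Fin d)) := {y | s ≤ ‖y‖} with hS_def
  set F : (Fin d → ℝ) → ℝ := fun x => ∏ j, g (x j) with hF_def
  set T : Set (Fin d → ℝ) := φ.symm ⁻¹' S with hT_def
  have hSm : MeasurableSet S := (isClosed_le continuous_const continuous_norm).measurableSet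
  have hTm : MeasurableSet T := φ.symm.measurable hSm
  have htransfer : (∫ x in S, (σ / π) ^ ((d : ℝ) / 2) * Real.exp (-σ * ‖x‖ ^ 2))
      = ∫ x in T, F x := by
    rw [← hφ.setIntegral_preimage_emb φ.symm.measurableEmbedding
      (fun y => (σ / π) ^ ((d : ℝ) / 2) * Real.exp (-σ * ‖y‖ ^ 2)) S]
    refine setIntegral_congr_fun hTm fun x _ => ?_
    rw [hprod]
    rfl
  rw [htransfer]
  -- the coordinate sets
  set B : Set ℝ := {t | a ≤ |t|} with hB_def
  have hBm : MeasurableSet B := (isClosed_le continuous_const continuous_abs).measurableSet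
  set A : Fin d → Set (Fin d → ℝ) := fun i => (fun x => x i) ⁻¹' B with hA_def
  have hAm : ∀ i, MeasurableSet (A i) := fun i => (measurable_pi_apply i) hBm
  have hFnn : ∀ x, 0 ≤ F x := fun x => Finset.prod_nonneg fun j _ => hgnn _
  have hFint : Integrable F := Integrable.fintype_prod (f := fun _ : Fin d => g) fun _ => hgint
  -- subset property
  have hsub : ∀ x : Fin d → ℝ, x ∈ T → ∃ i, x ∈ A i := by
    intro x hx
    by_contra hcon
    push_neg at hcon
    have hlt : ∀ i, |x i| < a := by
      intro i
      have := hcon i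
      simp only [hA_def, Set.mem_preimage, hB_def, Set.mem_setOf_eq, not_le] at this
      exact this
    have hsum : ∑ j, (x j) ^ 2 < d * a ^ 2 := by
      have : ∑ j, (x j) ^ 2 < ∑ _j : Fin d, a ^ 2 := by
        refine Finset.sum_lt_sum_of_nonempty ?_ fun j _ => ?_
        · exact Finset.univ_nonempty_iff.2 ⟨⟨0, hd⟩⟩
        · calc (x j) ^ 2 = |x j| ^ 2 := (sq_abs _).symm
            _ < a ^ 2 := by
              exact pow_lt_pow_left₀ (hlt j) (abs_nonneg _) (by norm_num)
      simpa [Finset.card_univ, nsmul_eq_mul] using this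
    have hda : (d : ℝ) * a ^ 2 = s ^ 2 := by
      rw [ha2]; field_simp
    have hxS : s ≤ ‖φ.symm x‖ := hx
    have hn : ‖φ.symm x‖ ^ 2 = ∑ j, (x j) ^ 2 := by
      rw [EuclideanSpace.norm_eq, Real.sq_sqrt (by positivity)]
      simp [Real.norm_eq_abs, sq_abs]
      rfl
    nlinarith [hxS, hs, norm_nonneg (φ.symm x)]
  -- union bound
  have hstep : (∫ x in T, F x) ≤ ∑ i, ∫ x in A i, F x := by
    rw [← integral_indicator hTm]
    have hrhs : ∀ i : Fin d, ∫ x in A i, F x = ∫ x, (A i).indicator F x := fun i =>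
      (integral_indicator (hAm i)).symm
    calc (∫ x, T.indicator F x) ≤ ∫ x, ∑ i, (A i).indicator F x := by
          refine integral_mono (hFint.indicator hTm) ?_ ?_
          · exact integrable_finset_sum _ fun i _ => hFint.indicator (hAm i)
          · intro x
            by_cases hx : x ∈ T
            · rw [Set.indicator_of_mem hx]
              obtain ⟨i, hi⟩ := hsub x hx
              calc F x = (A i).indicator F x := (Set.indicator_of_mem hi F).symm
                _ ≤ ∑ i, (A i).indicator F x :=
                  Finset.single_le_sum (fun j _ => Set.indicator_nonneg (fun y _ => hFnn y) x)
                    (Finset.mem_univ i)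
            · rw [Set.indicator_of_notMem hx]
              exact Finset.sum_nonneg fun j _ => Set.indicator_nonneg (fun y _ => hFnn y) x
      _ = ∑ i, ∫ x in A i, F x := by
          rw [integral_finset_sum _ fun i _ => hFint.indicator (hAm i)]
          exact Finset.sum_congr rfl fun i _ => (hrhs i).symm
  -- each coordinate integral
  have hcoord : ∀ i : Fin d, (∫ x in A i, F x) ≤ Real.exp (-σ * a ^ 2) := by
    intro i
    set h : Fin d → ℝ → ℝ := fun j => if j = i then B.indicator g else g with hh_def
    have hind : (A i).indicator F = fun x => ∏ j, h j (x j) := by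
      funext x
      by_cases hx : x ∈ A i
      · rw [Set.indicator_of_mem hx]
        refine Finset.prod_congr rfl fun j _ => ?_
        by_cases hji : j = i
        · simp only [hh_def, hji, if_pos rfl]
          exact (Set.indicator_of_mem (show x i ∈ B from hx) g).symm
        · simp [hh_def, hji]
      · rw [Set.indicator_of_notMem hx]
        refine (Finset.prod_eq_zero (Finset.mem_univ i) ?_).symm
        simp only [hh_def, if_pos rfl]
        exact Set.indicator_of_notMem (show x i ∉ B from hx) g
    have : (∫ x in A i, F x) = ∏ j, ∫ t : ℝ, h j t := by
      rw [← integral_indicator (hAm i), hind,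
        integral_fintype_prod_volume_eq_prod (ι := Fin d) (f := fun j (t : ℝ) => h j t)]
    rw [this]
    have hone : ∀ j ∈ Finset.univ, j ≠ i → (∫ t : ℝ, h j t) = 1 := by
      intro j _ hji
      simp only [hh_def, if_neg hji]
      exact gauss_total hσ
    rw [Finset.prod_eq_single_of_mem i (Finset.mem_univ i) hone]
    simp only [hh_def, if_pos rfl]
    rw [integral_indicator hBm]
    exact gauss_tail hσ ha
  calc (∫ x in T, F x) ≤ ∑ i, ∫ x in A i, F x := hstep
    _ ≤ ∑ _i : Fin d, Real.exp (-σ * a ^ 2) := Finset.sum_le_sum fun i _ => hcoord i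
    _ = d * Real.exp (-σ * s ^ 2 / d) := by
        rw [Finset.sum_const, Finset.card_univ, Fintype.card_fin, nsmul_eq_mul, hexp_eq]
end

section
/- For every integer d ≥ 3 and all β, σ in (0, ∞) it holds that ∫_{{x ∈ ℝ^d : √(d(1+β))/√(2σ) ≤ ‖x‖₂ ≤ d√(1+β)/√(2σ)}} (σ/π)^{d/2} e^{-σ‖x‖₂²} dx ≤ d ((1+β)/e^β)^{d/2}. -/
open Real MeasureTheory

theorem gaussian_annulus_upper (d : ℕ) (hd : 3 ≤ d) (β σ : ℝ) (hβ : 0 < β) (hσ : 0 < σ) :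
    (∫ x in {y : EuclideanSpace ℝ (Fin d) |
        Real.sqrt (d * (1 + β)) / Real.sqrt (2 * σ) ≤ ‖y‖ ∧
          ‖y‖ ≤ d * Real.sqrt (1 + β) / Real.sqrt (2 * σ)},
        (σ / π) ^ ((d : ℝ) / 2) * Real.exp (-σ * ‖x‖ ^ 2))
      ≤ d * ((1 + β) / Real.exp β) ^ ((d : ℝ) / 2) := by
  set E := EuclideanSpace ℝ (Fin d)
  have h1β : (0:ℝ) < 1 + β := by linarith
  set c : ℝ := β / (1 + β) with hc
  set σ' : ℝ := σ / (1 + β) with hσ'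
  have hσ'pos : 0 < σ' := by positivity
  have hcpos : 0 < c := by positivity
  have hsum : c * σ + σ' = σ := by
    rw [hc, hσ', div_mul_eq_mul_div, ← add_div, div_eq_iff h1β.ne']
    ring
  set S : Set E := {y : E |
      Real.sqrt (d * (1 + β)) / Real.sqrt (2 * σ) ≤ ‖y‖ ∧
        ‖y‖ ≤ d * Real.sqrt (1 + β) / Real.sqrt (2 * σ)} with hS
  have hSmeas : MeasurableSet S := by
    apply MeasurableSet.inter
    · exact measurableSet_le measurable_const continuous_norm.measurable
    · exact measurableSet_le continuous_norm.measurable measurable_const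
  -- integrability of gaussians on E
  have key : ∀ b : ℝ, 0 < b → Integrable (fun v : E => rexp (-b * ‖v‖^2)) := by
    intro b hb
    have h := GaussianFourier.integrable_cexp_neg_mul_sq_norm_add (V := E) (b := (b:ℂ))
      (by simpa using hb) 0 0
    have h2 := h.re
    apply h2.congr
    filter_upwards with v
    simp only [zero_mul, add_zero]
    have e1 : -(b:ℂ) * (‖v‖:ℂ)^2 = ((-b * ‖v‖^2 : ℝ) : ℂ) := by push_cast; ring
    change (Complex.exp _).re = _
    rw [e1]
    exact Complex.exp_ofReal_re _
  set K : ℝ := (σ / π) ^ ((d : ℝ) / 2) with hK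
  have hKpos : 0 < K := by
    apply Real.rpow_pos_of_pos
    exact div_pos hσ pi_pos
  set C : ℝ := rexp (-(c * (d * (1 + β)) / 2)) with hC
  have hCpos : 0 < C := exp_pos _
  have hfint : Integrable (fun x : E => K * rexp (-σ * ‖x‖^2)) := (key σ hσ).const_mul K
  have hgint : Integrable (fun x : E => K * C * rexp (-σ' * ‖x‖^2)) :=
    (key σ' hσ'pos).const_mul (K * C)
  -- pointwise bound on S
  have hmono : ∀ x ∈ S, K * rexp (-σ * ‖x‖^2) ≤ K * C * rexp (-σ' * ‖x‖^2) := by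
    intro x hx
    have hx1 : Real.sqrt (d * (1 + β)) / Real.sqrt (2 * σ) ≤ ‖x‖ := hx.1
    have hnormsq : d * (1 + β) / (2 * σ) ≤ ‖x‖^2 := by
      have h0 : (0:ℝ) ≤ Real.sqrt (d * (1 + β)) / Real.sqrt (2 * σ) := by positivity
      have := pow_le_pow_left₀ h0 hx1 2
      calc d * (1 + β) / (2 * σ)
          = (Real.sqrt (d * (1 + β)) / Real.sqrt (2 * σ))^2 := by
            rw [div_pow, Real.sq_sqrt (by positivity), Real.sq_sqrt (by positivity)]
        _ ≤ ‖x‖^2 := this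
    have hsplit : rexp (-σ * ‖x‖^2) = rexp (-(c*σ) * ‖x‖^2) * rexp (-σ' * ‖x‖^2) := by
      rw [← Real.exp_add]; congr 1; nlinarith [hsum]
    rw [hsplit]
    have hE : rexp (-(c * σ) * ‖x‖^2) ≤ C := by
      rw [hC]
      apply Real.exp_le_exp.2
      rw [neg_mul, neg_le_neg_iff]
      have h3 : c * σ * (↑d * (1 + β) / (2 * σ)) = c * (↑d * (1 + β)) / 2 := by
        field_simp
      have h4 := mul_le_mul_of_nonneg_left hnormsq (mul_pos hcpos hσ).le
      linarith
    calc K * (rexp (-(c * σ) * ‖x‖^2) * rexp (-σ' * ‖x‖^2))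
        ≤ K * (C * rexp (-σ' * ‖x‖^2)) := by
          apply mul_le_mul_of_nonneg_left _ hKpos.le
          exact mul_le_mul_of_nonneg_right hE (exp_pos _).le
      _ = K * C * rexp (-σ' * ‖x‖^2) := by ring
  have step1 : (∫ x in S, K * rexp (-σ * ‖x‖^2)) ≤ ∫ x in S, K * C * rexp (-σ' * ‖x‖^2) :=
    setIntegral_mono_on hfint.integrableOn hgint.integrableOn hSmeas hmono
  have step2 : (∫ x in S, K * C * rexp (-σ' * ‖x‖^2)) ≤ ∫ x : E, K * C * rexp (-σ' * ‖x‖^2) :=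
    setIntegral_le_integral hgint (Filter.Eventually.of_forall fun x => by positivity)
  have hfull : (∫ x : E, K * C * rexp (-σ' * ‖x‖^2)) = ((1 + β) / Real.exp β) ^ ((d : ℝ) / 2) := by
    rw [integral_const_mul, GaussianFourier.integral_rexp_neg_mul_sq_norm hσ'pos]
    have hrank : (Module.finrank ℝ E : ℝ) = (d : ℝ) := by
      simp [E, finrank_euclideanSpace_fin]
    rw [hrank]
    have hCval : C = (Real.exp β)⁻¹ ^ ((d:ℝ)/2) := by
      rw [hC, ← Real.exp_neg, ← Real.exp_mul]
      congr 1
      field_simp [hc]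
      have hc1 : c * (1 + β) = β := by rw [hc]; exact div_mul_cancel₀ β h1β.ne'
      linear_combination -hc1
    rw [hCval, hK, ← Real.mul_rpow (by positivity) (by positivity),
      ← Real.mul_rpow (by positivity) (by positivity)]
    congr 1
    rw [hσ']
    have he : rexp β ≠ 0 := Real.exp_ne_zero β
    field_simp
  have hfinal : ((1 + β) / Real.exp β) ^ ((d : ℝ) / 2) ≤ d * ((1 + β) / Real.exp β) ^ ((d : ℝ) / 2) := by
    have h1 : (1:ℝ) ≤ d := by exact_mod_cast le_trans (by norm_num) hd
    have h2 : (0:ℝ) ≤ ((1 + β) / Real.exp β) ^ ((d : ℝ) / 2) := by positivity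
    nlinarith
  calc (∫ x in S, K * rexp (-σ * ‖x‖^2)) ≤ ∫ x in S, K * C * rexp (-σ' * ‖x‖^2) := step1
    _ ≤ ∫ x : E, K * C * rexp (-σ' * ‖x‖^2) := step2
    _ = ((1 + β) / Real.exp β) ^ ((d : ℝ) / 2) := hfull
    _ ≤ d * ((1 + β) / Real.exp β) ^ ((d : ℝ) / 2) := hfinal
end

section
/- For all σ, s in (0, ∞) it holds that ∫_s^∞ e^{-σ x²} dx ≥ e^{-σ s²} / (s^{-1} + 2σs). -/
open Real MeasureTheory Filter Set

theorem gaussian_tail_lower (σ s : ℝ) (hσ : 0 < σ) (hs : 0 < s) :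
    (∫ x in Set.Ioi s, Real.exp (-σ * x ^ 2)) ≥ Real.exp (-σ * s ^ 2) / (s⁻¹ + 2 * σ * s) := by
  set g : ℝ → ℝ := fun x => -Real.exp (-σ * x ^ 2) / (2 * σ * x) with hg_def
  set g' : ℝ → ℝ := fun x => Real.exp (-σ * x ^ 2) * (1 + 1 / (2 * σ * x ^ 2)) with hg'_def
  have hderiv : ∀ x ∈ Ici s, HasDerivAt g (g' x) x := by
    intro x hx
    have hxpos : 0 < x := lt_of_lt_of_le hs hx
    have hd : x ≠ 0 := ne_of_gt hxpos
    have h1 : HasDerivAt (fun x : ℝ => -Real.exp (-σ * x ^ 2))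
        (2 * σ * x * Real.exp (-σ * x ^ 2)) x := by
      have : HasDerivAt (fun x : ℝ => -σ * x ^ 2) (-σ * (2 * x)) x := by
        simpa using ((hasDerivAt_pow 2 x).const_mul (-σ))
      have := (this.exp).neg
      exact this.congr_deriv (by ring)
    have h2 : HasDerivAt (fun x : ℝ => 2 * σ * x) (2 * σ) x := by
      simpa using (hasDerivAt_id x).const_mul (2 * σ)
    have hden : 2 * σ * x ≠ 0 := by positivity
    have := h1.div h2 hden
    refine this.congr_deriv ?_
    rw [hg'_def]
    field_simp
    ring
  have g'pos : ∀ x ∈ Ioi s, 0 ≤ g' x := by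
    intro x hx
    have hxpos : 0 < x := lt_trans hs hx
    have : (0:ℝ) ≤ 1 + 1 / (2 * σ * x ^ 2) := by positivity
    exact mul_nonneg (Real.exp_nonneg _) this
  have hg_tendsto : Tendsto g atTop (nhds 0) := by
    have h1 : Tendsto (fun x : ℝ => -Real.exp (-σ * x ^ 2)) atTop (nhds 0) := by
      have : Tendsto (fun x : ℝ => -σ * x ^ 2) atTop atBot := by
        apply Tendsto.const_mul_atTop_of_neg (neg_neg_iff_pos.mpr hσ)
        exact tendsto_pow_atTop (by norm_num)
      simpa using (Real.tendsto_exp_atBot.comp this).neg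
    have h2 : Tendsto (fun x : ℝ => (2 * σ * x)⁻¹) atTop (nhds 0) := by
      apply tendsto_inv_atTop_zero.comp
      exact Tendsto.const_mul_atTop (by positivity) tendsto_id
    have := h1.mul h2
    simpa [hg_def, div_eq_mul_inv] using this
  -- FTC: ∫ g' over (s, ∞) = exp(-σ s²)/(2σs)
  have hFTC : ∫ x in Ioi s, g' x = Real.exp (-σ * s ^ 2) / (2 * σ * s) := by
    rw [integral_Ioi_of_hasDerivAt_of_nonneg' hderiv g'pos hg_tendsto]
    simp [hg_def]
    ring
  have hint_g' : IntegrableOn g' (Ioi s) :=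
    integrableOn_Ioi_deriv_of_nonneg' hderiv g'pos hg_tendsto
  have hint_gauss : IntegrableOn (fun x => Real.exp (-σ * x ^ 2)) (Ioi s) :=
    (integrable_exp_neg_mul_sq hσ).integrableOn
  set c : ℝ := 1 + 1 / (2 * σ * s ^ 2) with hc_def
  have hc_pos : 0 < c := by positivity
  -- monotonicity: ∫ g' ≤ c * ∫ gaussian
  have hmono : (∫ x in Ioi s, g' x) ≤ c * ∫ x in Ioi s, Real.exp (-σ * x ^ 2) := by
    rw [← integral_const_mul]
    apply setIntegral_mono_on hint_g' (hint_gauss.const_mul c) measurableSet_Ioi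
    intro x hx
    have hxs : s < x := hx
    have hxpos : 0 < x := lt_trans hs hxs
    rw [hg'_def, hc_def]
    rw [mul_comm (1 + 1 / (2 * σ * s ^ 2))]
    apply mul_le_mul_of_nonneg_left _ (Real.exp_nonneg _)
    have h1 : 1 / (2 * σ * x ^ 2) ≤ 1 / (2 * σ * s ^ 2) := by
      apply one_div_le_one_div_of_le (by positivity)
      have : s ^ 2 ≤ x ^ 2 := by nlinarith
      nlinarith
    linarith
  -- combine
  have key : Real.exp (-σ * s ^ 2) / (2 * σ * s) ≤
      c * ∫ x in Ioi s, Real.exp (-σ * x ^ 2) := by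
    rw [← hFTC]; exact hmono
  have hdenom : s⁻¹ + 2 * σ * s = (2 * σ * s) * c := by
    rw [hc_def]; field_simp; ring
  rw [ge_iff_le, hdenom, div_le_iff₀ (by positivity)]
  rw [div_le_iff₀ (by positivity)] at key
  nlinarith [key]
end
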